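/- Schensted's theorem: for a finite sequence b of distinct integers, the length of the first row of the RSK insertion tableau P(b) equals the maximal length of a strictly increasing subsequence of b. -/

import Mathlib

/-! RSK insertion for sequences of (distinct) integers. -/

/-- Row insertion: bump the leftmost entry strictly larger than `x`. -/
def rowIns (r : List ℤ) (x : ℤ) : List ℤ × Option ℤ :=
  match r.findIdx? (fun y => decide (x < y)) with
  | none => (r ++ [x], none)
  | some i => (r.set i x, r[i]?)

/-- Insertion of an entry into a tableau (list of rows). -/
def tabIns : List (List ℤ) → ℤ → List (List ℤ)
  | [], x => [[x]]
  | r :: rest, x =>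
    match rowIns r x with
    | (r', none) => r' :: rest
    | (r', some y) => r' :: tabIns rest y

/-- The RSK (Robinson–Schensted) insertion tableau `P(b)` of a sequence. -/
def RSK (b : List ℤ) : List (List ℤ) := b.foldl tabIns []

/-- First-row insertion. -/
def ins1 (r : List ℤ) (x : ℤ) : List ℤ := (rowIns r x).1

/-- Patience sorting: the first row of RSK. -/
def P1 (b : List ℤ) : List ℤ := b.foldl ins1 []

lemma tabIns_head (t : List (List ℤ)) (x : ℤ) :
    (tabIns t x).headD [] = ins1 (t.headD []) x := by
  cases t with
  | nil => rfl
  | cons r rest =>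
    rcases h : rowIns r x with ⟨r', o⟩
    cases o <;> simp [tabIns, ins1, h]

lemma foldl_head (l : List ℤ) : ∀ t : List (List ℤ),
    ((l.foldl tabIns t).headD []) = l.foldl ins1 (t.headD []) := by
  induction l with
  | nil => intro t; rfl
  | cons x l ih => intro t; simp only [List.foldl_cons, ih, tabIns_head]

lemma RSK_head (b : List ℤ) : ((RSK b).headD []) = P1 b := foldl_head b []

/-- The patience-sorting invariant. -/
def SInv (pref r : List ℤ) : Prop :=
  r.Chain' (· < ·) ∧
  (∀ j (h : j < r.length), ∃ s : List ℤ, s.Sublist pref ∧ s.Chain' (· < ·) ∧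
      s.length = j + 1 ∧ s.getLast? = some (r[j])) ∧
  (∀ s : List ℤ, s.Sublist pref → s.Chain' (· < ·) → ∀ z, s.getLast? = some z →
      ∃ h : s.length - 1 < r.length, r[s.length - 1] ≤ z)

lemma SInv.mem_pref {pref r : List ℤ} (H : SInv pref r) {y : ℤ} (hy : y ∈ r) : y ∈ pref := by
  obtain ⟨j, hj, rfl⟩ := List.mem_iff_getElem.1 hy
  obtain ⟨s, hs, -, hlen, hlast⟩ := H.2.1 j hj
  have hne : s ≠ [] := by intro h; simp [h] at hlast
  have : r[j] ∈ s := by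
    rw [List.getLast?_eq_getLast hne] at hlast
    rw [← Option.some_inj.1 hlast]
    exact List.getLast_mem hne
  exact hs.subset this

lemma inv_step {pref r : List ℤ} (x : ℤ) (hx : x ∉ pref) (H : SInv pref r) :
    SInv (pref ++ [x]) (ins1 r x) := by
  obtain ⟨hchain, hwit, hub⟩ := H
  have hmono : ∀ j k (hj : j < r.length) (hk : k < r.length), j ≤ k → r[j] ≤ r[k] := by
    intro j k hj hk hjk
    rcases Nat.lt_or_ge j k with h | h
    · exact le_of_lt ((List.pairwise_iff_getElem.1 (List.isChain_iff_pairwise.1 hchain)) j k hj hk h)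
    · have : j = k := le_antisymm hjk h
      subst this; rfl
  unfold ins1 rowIns
  rcases hf : r.findIdx? (fun y => decide (x < y)) with _ | i
  · -- no bump: append x
    have hall : ∀ y ∈ r, y < x := by
      intro y hy
      have := List.findIdx?_eq_none_iff.1 hf y hy
      have hyx : ¬ x < y := by simpa using this
      have hne : y ≠ x := by
        intro h; subst h; exact hx (SInv.mem_pref ⟨hchain, hwit, hub⟩ hy)
      omega
    simp only
    refine ⟨?_, ?_, ?_⟩
    · unfold List.Chain'; rw [List.isChain_append]
      refine ⟨hchain, List.isChain_singleton x, ?_⟩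
      intro a ha y hy
      simp only [List.head?_cons, Option.mem_def, Option.some.injEq] at hy
      subst hy
      have hne : r ≠ [] := by intro h; simp [h] at ha
      rw [List.getLast?_eq_getLast hne, Option.mem_def, Option.some_inj] at ha
      exact ha ▸ hall _ (List.getLast_mem hne)
    · intro j hj
      rw [List.length_append, List.length_singleton] at hj
      rcases Nat.lt_or_ge j r.length with h | h
      · obtain ⟨s, hs, hc, hlen, hlast⟩ := hwit j h
        exact ⟨s, hs.trans (List.sublist_append_left pref [x]), hc, hlen, by
          rwa [List.getElem_append_left h]⟩
      · have hj' : j = r.length := by omega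
        subst hj'
        have hgx : (r ++ [x])[r.length]'(by simp) = x := by
          rw [List.getElem_append_right (le_refl _)]; simp
        rcases Nat.eq_zero_or_pos r.length with h0 | h0
        · refine ⟨[x], List.sublist_append_right pref [x], List.isChain_singleton x, by simp [h0], ?_⟩
          simp [hgx]
        · obtain ⟨s, hs, hc, hlen, hlast⟩ := hwit (r.length - 1) (by omega)
          refine ⟨s ++ [x], hs.append (List.Sublist.refl [x]), ?_, by simp [hlen]; omega, ?_⟩
          · unfold List.Chain'; rw [List.isChain_append]
            refine ⟨hc, List.isChain_singleton x, ?_⟩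
            intro a ha y hy
            simp only [List.head?_cons, Option.mem_def, Option.some.injEq] at hy
            subst hy
            rw [hlast, Option.mem_def, Option.some_inj] at ha
            exact ha ▸ hall _ (List.getElem_mem _)
          · rw [List.getLast?_concat, hgx]
    · intro s hs hc z hz
      obtain ⟨l₁, l₂, rfl, h₁, h₂⟩ := List.sublist_append_iff.1 hs
      have h₂' : l₂ = [] ∨ l₂ = [x] := by simpa using h₂
      rcases h₂' with rfl | rfl
      · rw [List.append_nil] at hc hz ⊢
        obtain ⟨h, hle⟩ := hub l₁ h₁ hc z hz
        refine ⟨by simp; omega, ?_⟩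
        rwa [List.getElem_append_left h]
      · have hzx : z = x := by
          rw [List.getLast?_concat] at hz; exact (Option.some_inj.1 hz).symm
        rw [hzx]
        rcases List.eq_nil_or_concat l₁ with rfl | ⟨t, w, rfl⟩
        · refine ⟨by simp, ?_⟩
          simp only [List.nil_append, List.length_singleton]
          rcases Nat.eq_zero_or_pos r.length with h0 | h0
          · have : r = [] := List.length_eq_zero_iff.1 h0
            subst this; simp
          · rw [List.getElem_append_left h0]
            exact le_of_lt (hall _ (List.getElem_mem _))
        · -- l₁ = t ++ [w] nonempty
          simp only [List.concat_eq_append] at h₁ hc hz ⊢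
          have hw : (t ++ [w]).getLast? = some w := List.getLast?_concat
          have hcl : (t ++ [w]).Chain' (· < ·) ∧ w < x := by
            unfold List.Chain' at hc; rw [List.isChain_append] at hc
            refine ⟨hc.1, ?_⟩
            have := hc.2.2 w (by rw [hw]; rfl) x (by simp)
            exact this
          obtain ⟨h₃, hle⟩ := hub (t ++ [w]) h₁ hcl.1 w hw
          simp only [List.length_append, List.length_singleton] at h₃
          have hlt2 : (t ++ [w] ++ [x]).length - 1 < (r ++ [x]).length := by
            simp only [List.length_append, List.length_singleton]; omega
          refine ⟨hlt2, ?_⟩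
          have hmem : (r ++ [x])[(t ++ [w] ++ [x]).length - 1] ∈ r ++ [x] :=
            List.getElem_mem hlt2
          rcases List.mem_append.1 hmem with hm | hm
          · exact le_of_lt (hall _ hm)
          · rw [List.mem_singleton] at hm
            exact le_of_eq hm
  · -- bump at index i
    obtain ⟨hi, hxi, hsmall⟩ := List.findIdx?_eq_some_iff_getElem.1 hf
    have hxi : x < r[i] := by simpa using hxi
    have hsmall : ∀ j (h : j < i), r[j]'(Nat.lt_trans h hi) < x := by
      intro j h
      have := hsmall j h
      have h1 : ¬ x < r[j]'(Nat.lt_trans h hi) := by simpa using this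
      have hne : r[j]'(Nat.lt_trans h hi) ≠ x := by
        intro he
        exact hx (he ▸ SInv.mem_pref ⟨hchain, hwit, hub⟩ (List.getElem_mem _))
      omega
    simp only
    have hlen : (r.set i x).length = r.length := List.length_set
    have hget : ∀ j (h : j < r.length), (r.set i x)[j]'(by omega) = if i = j then x else r[j] :=
      fun j h => List.getElem_set _
    have hle' : ∀ j (h : j < r.length), (r.set i x)[j]'(by omega) ≤ r[j] := by
      intro j h
      rw [hget j h]
      split
      · next he => exact le_of_lt (he ▸ hxi)
      · rfl
    refine ⟨?_, ?_, ?_⟩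
    · unfold List.Chain'; rw [List.isChain_iff_pairwise, List.pairwise_iff_getElem]
      intro j k hj hk hjk
      rw [hlen] at hj hk
      rw [hget j hj, hget k hk]
      have hjk' : r[j] < r[k] :=
        (List.pairwise_iff_getElem.1 (List.isChain_iff_pairwise.1 hchain)) j k hj hk hjk
      split <;> split
      · omega
      · next he _ => exact lt_of_lt_of_le (he ▸ hxi) (hmono _ _ hj hk (le_of_lt hjk))
      · next hne he => exact hsmall j (by omega)
      · exact hjk'
    · intro j hj
      rw [hlen] at hj
      rcases eq_or_ne i j with rfl | hne
      · -- j = i : need witness ending at x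
        have hgx : (r.set i x)[i]'(by omega) = x := by rw [hget i hj]; simp
        rcases Nat.eq_zero_or_pos i with h0 | h0
        · subst h0
          exact ⟨[x], List.sublist_append_right pref [x], List.isChain_singleton x, rfl, by simp [hgx]⟩
        · obtain ⟨s, hs, hc, hslen, hslast⟩ := hwit (i - 1) (by omega)
          refine ⟨s ++ [x], hs.append (List.Sublist.refl [x]), ?_, by simp [hslen]; omega, ?_⟩
          · unfold List.Chain'; rw [List.isChain_append]
            refine ⟨hc, List.isChain_singleton x, ?_⟩
            intro a ha y hy
            simp only [List.head?_cons, Option.mem_def, Option.some.injEq] at hy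
            subst hy
            rw [hslast, Option.mem_def, Option.some_inj] at ha
            exact ha ▸ hsmall (i - 1) (by omega)
          · rw [List.getLast?_concat, hgx]
      · obtain ⟨s, hs, hc, hslen, hslast⟩ := hwit j hj
        refine ⟨s, hs.trans (List.sublist_append_left pref [x]), hc, hslen, ?_⟩
        rw [hget j hj, if_neg hne]; exact hslast
    · intro s hs hc z hz
      obtain ⟨l₁, l₂, rfl, h₁, h₂⟩ := List.sublist_append_iff.1 hs
      have h₂' : l₂ = [] ∨ l₂ = [x] := by simpa using h₂
      rcases h₂' with rfl | rfl
      · rw [List.append_nil] at hc hz ⊢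
        obtain ⟨h, hle⟩ := hub l₁ h₁ hc z hz
        exact ⟨by omega, le_trans (hle' _ h) hle⟩
      · have hzx : z = x := by
          rw [List.getLast?_concat] at hz; exact (Option.some_inj.1 hz).symm
        rw [hzx]
        rcases List.eq_nil_or_concat l₁ with rfl | ⟨t, w, rfl⟩
        · refine ⟨by simp; omega, ?_⟩
          simp only [List.nil_append, List.length_singleton]
          rw [hget 0 (by omega)]
          split
          · rfl
          · next hne => exact le_of_lt (hsmall 0 (by omega))
        · simp only [List.concat_eq_append] at h₁ hc hz ⊢
          have hw : (t ++ [w]).getLast? = some w := List.getLast?_concat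
          have hcl : (t ++ [w]).Chain' (· < ·) ∧ w < x := by
            unfold List.Chain' at hc; rw [List.isChain_append] at hc
            exact ⟨hc.1, hc.2.2 w (by rw [hw]; rfl) x (by simp)⟩
          obtain ⟨h₃, hle⟩ := hub (t ++ [w]) h₁ hcl.1 w hw
          have hL : (t ++ [w]).length = t.length + 1 := by simp
          have hni : t.length < i := by
            by_contra hcon
            push_neg at hcon
            have hmm : r[i] ≤ r[(t ++ [w]).length - 1]'h₃ := hmono i _ hi h₃ (by omega)
            omega
          have hk : (t ++ [w] ++ [x]).length - 1 = t.length + 1 := by simp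
          have hlt2 : (t ++ [w] ++ [x]).length - 1 < (r.set i x).length := by
            rw [List.length_set]; omega
          refine ⟨hlt2, ?_⟩
          rw [hget _ (by rw [← hlen]; exact hlt2)]
          split
          · exact le_refl x
          · next hne => exact le_of_lt (hsmall _ (by omega))

lemma inv_fold : ∀ (b pref r : List ℤ), SInv pref r → (∀ y ∈ b, y ∉ pref) → b.Nodup →
    SInv (pref ++ b) (b.foldl ins1 r) := by
  intro b
  induction b with
  | nil => intro pref r H _ _; simpa using H
  | cons x b ih =>
    intro pref r H hdisj hnd
    have H' : SInv (pref ++ [x]) (ins1 r x) := inv_step x (hdisj x (by simp)) H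
    have hdisj' : ∀ y ∈ b, y ∉ pref ++ [x] := by
      intro y hy
      simp only [List.mem_append, List.mem_singleton]
      push_neg
      refine ⟨hdisj y (by simp [hy]), ?_⟩
      intro he
      exact (List.nodup_cons.1 hnd).1 (he ▸ hy)
    have := ih (pref ++ [x]) (ins1 r x) H' hdisj' (List.nodup_cons.1 hnd).2
    simpa using this

lemma inv_P1 (b : List ℤ) (hb : b.Nodup) : SInv b (P1 b) := by
  have := inv_fold b [] [] ⟨List.isChain_nil, by simp, by
    intro s hs _ z hz
    rw [List.sublist_nil.1 hs] at hz
    simp at hz⟩ (by simp) hb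
  simpa [P1] using this

/-- Schensted's theorem: the length of the first row of the RSK insertion
tableau `P(b)` is the maximal length of a strictly increasing subsequence of a
sequence `b` of distinct integers. -/
theorem schensted (b : List ℤ) (hb : b.Nodup) :
    IsGreatest {q | ∃ s : List ℤ, s.Sublist b ∧ s.Chain' (· < ·) ∧ s.length = q}
      ((RSK b).headD []).length := by
  rw [RSK_head]
  obtain ⟨hchain, hwit, hub⟩ := inv_P1 b hb
  constructor
  · -- membership
    rcases Nat.eq_zero_or_pos (P1 b).length with h0 | h0
    · exact ⟨[], List.nil_sublist b, List.isChain_nil, by simp [h0]⟩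
    · obtain ⟨s, hs, hc, hlen, -⟩ := hwit ((P1 b).length - 1) (by omega)
      exact ⟨s, hs, hc, by omega⟩
  · -- upper bound
    rintro q ⟨s, hs, hc, rfl⟩
    rcases List.eq_nil_or_concat s with rfl | ⟨t, w, rfl⟩
    · simp
    · simp only [List.concat_eq_append] at hs hc ⊢
      obtain ⟨h, -⟩ := hub (t ++ [w]) hs hc w List.getLast?_concat
      simp only [List.length_append, List.length_singleton] at h ⊢
      omega
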